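/- For every positive integer a and every s ≥ 2, the consecutive values of τ satisfy |τ_s(a) − τ_{s−1}(a)| ≤ 1. -/
import Mathlib


noncomputable def tauN (s a : ℕ) : ℕ := {t : ℕ | 0 < t ∧ s^2 * a < t^2 ∧ t^2 < s^2 * (a+1)}.ncard

private lemma le_of_sq {x y : ℕ} (h : x*x ≤ y*y) : x ≤ y := by
  by_contra hc
  push_neg at hc
  exact absurd h (not_le.mpr (Nat.mul_self_lt_mul_self hc))

private lemma lt_of_sq {x y : ℕ} (h : x*x < y*y) : x < y := by
  by_contra hc
  push_neg at hc
  exact absurd h (not_lt.mpr (Nat.mul_le_mul hc hc))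

lemma tau_eq (s a : ℕ) (ha : 0 < a) (hs : 0 < s) :
    tauN s a = Nat.sqrt (s^2*(a+1)-1) - Nat.sqrt (s^2*a) := by
  have hs1 : 1 ≤ s^2 := Nat.one_le_pow _ _ hs
  have hA1 : 1 ≤ Nat.sqrt (s^2*a) := Nat.le_sqrt.mpr (by nlinarith)
  have hset : {t : ℕ | 0 < t ∧ s^2 * a < t^2 ∧ t^2 < s^2 * (a+1)}
      = ↑(Finset.Ioc (Nat.sqrt (s^2*a)) (Nat.sqrt (s^2*(a+1)-1))) := by
    ext t
    simp only [Finset.coe_Ioc, Set.mem_Ioc, Set.mem_setOf_eq]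
    have hpos : 0 < s^2*(a+1) := by positivity
    constructor
    · rintro ⟨ht, h1, h2⟩
      have htt : t*t = t^2 := (sq t).symm
      exact ⟨Nat.sqrt_lt.mpr (by omega), Nat.le_sqrt.mpr (by omega)⟩
    · rintro ⟨h1, h2⟩
      have h1' : s^2*a < t*t := Nat.sqrt_lt.mp h1
      have h2' : t*t ≤ s^2*(a+1)-1 := Nat.le_sqrt.mp h2
      have hgt : 0 < t := lt_of_le_of_lt (by omega : (0:ℕ) ≤ Nat.sqrt (s^2*a)) h1
      have htt : t*t = t^2 := (sq t).symm
      exact ⟨hgt, by omega, by omega⟩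
  rw [tauN, hset, Set.ncard_coe_finset, Nat.card_Ioc]

lemma L1 (r m : ℕ) : Nat.sqrt (r^2*m) + Nat.sqrt m ≤ Nat.sqrt ((r+1)^2*m) := by
  set u := Nat.sqrt (r^2*m) with hu
  set v := Nat.sqrt m with hv
  have h1 : u*u ≤ r^2*m := Nat.sqrt_le _
  have h2 : v*v ≤ m := Nat.sqrt_le _
  have h3 : u*v ≤ r*m := le_of_sq (by nlinarith)
  rw [Nat.le_sqrt]
  nlinarith

lemma L2 (r m : ℕ) (hm : 1 ≤ m) :
    Nat.sqrt ((r+1)^2*m) ≤ Nat.sqrt (r^2*m) + Nat.sqrt (m-1) + 1 := by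
  set u := Nat.sqrt (r^2*m) with hu
  set w := Nat.sqrt (m-1) with hw
  have h1 : r^2*m < (u+1)*(u+1) := Nat.lt_succ_sqrt _
  have h2 : m-1 < (w+1)*(w+1) := Nat.lt_succ_sqrt _
  have h2' : m ≤ (w+1)*(w+1) := by omega
  have h3 : r*m < (u+1)*(w+1) := lt_of_sq (by nlinarith)
  have : Nat.sqrt ((r+1)^2*m) < u + w + 2 := Nat.sqrt_lt.mpr (by nlinarith)
  omega

lemma L3 (r m : ℕ) (hm : 1 ≤ m) (hr : 1 ≤ r) :
    Nat.sqrt (r^2*m-1) + Nat.sqrt m ≤ Nat.sqrt ((r+1)^2*m-1) := by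
  set B := Nat.sqrt (r^2*m-1) with hB
  set v := Nat.sqrt m with hv
  have hrm : 1 ≤ r^2*m := by nlinarith [Nat.one_le_pow 2 r hr]
  have h1 : B*B ≤ r^2*m-1 := Nat.sqrt_le _
  have h1' : B*B + 1 ≤ r^2*m := by omega
  have h2 : v*v ≤ m := Nat.sqrt_le _
  have h3 : B*v < r*m := lt_of_sq (by nlinarith)
  rw [Nat.le_sqrt]
  have : (B+v)*(B+v) + 1 ≤ (r+1)^2*m := by nlinarith
  omega

lemma L4 (r m : ℕ) (hm : 1 ≤ m) :
    Nat.sqrt ((r+1)^2*m-1) ≤ Nat.sqrt (r^2*m-1) + Nat.sqrt (m-1) + 1 := by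
  set B := Nat.sqrt (r^2*m-1) with hB
  set w := Nat.sqrt (m-1) with hw
  have h1 : r^2*m-1 < (B+1)*(B+1) := Nat.lt_succ_sqrt _
  have h1' : r^2*m ≤ (B+1)*(B+1) := by
    rcases Nat.eq_zero_or_pos (r^2*m) with h | h
    · omega
    · omega
  have h2 : m-1 < (w+1)*(w+1) := Nat.lt_succ_sqrt _
  have h2' : m ≤ (w+1)*(w+1) := by omega
  have h3 : r*m ≤ (B+1)*(w+1) := le_of_sq (by nlinarith)
  have : Nat.sqrt ((r+1)^2*m-1) < B + w + 2 := by
    rw [Nat.sqrt_lt]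
    set K := (r+1)^2*m with hK
    have hK1 : 0 < K := by rw [hK]; positivity
    have : K ≤ (B+w+2)*(B+w+2) := by rw [hK]; nlinarith
    omega
  omega

theorem stmt_4 (a s : ℕ) (ha : 0 < a) (hs : 2 ≤ s) :
    |(tauN s a : ℤ) - (tauN (s-1) a : ℤ)| ≤ 1 := by
  obtain ⟨r, rfl⟩ : ∃ r, s = r + 1 := ⟨s-1, by omega⟩
  have hr : 1 ≤ r := by omega
  have hss : r + 1 - 1 = r := by omega
  rw [hss, tau_eq (r+1) a ha (by omega), tau_eq r a ha (by omega)]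
  have hr2 : 1 ≤ r^2 := Nat.one_le_pow 2 r hr
  have hAB1 : Nat.sqrt (r^2*a) ≤ Nat.sqrt (r^2*(a+1)-1) :=
    Nat.sqrt_le_sqrt (by
      have h : r^2*(a+1) = r^2*a + r^2 := by ring
      omega)
  have hAB2 : Nat.sqrt ((r+1)^2*a) ≤ Nat.sqrt ((r+1)^2*(a+1)-1) :=
    Nat.sqrt_le_sqrt (by
      have h : (r+1)^2*(a+1) = (r+1)^2*a + (r+1)^2 := by ring
      have h2 : 1 ≤ (r+1)^2 := Nat.one_le_pow 2 (r+1) (by omega)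
      omega)
  have hL1 := L1 r a
  have hL2 := L2 r a ha
  have hL3 := L3 r (a+1) (by omega) hr
  have hL4 := L4 r (a+1) (by omega)
  have hmono1 : Nat.sqrt (a-1) ≤ Nat.sqrt (a+1) := Nat.sqrt_le_sqrt (by omega)
  have hmono2 : Nat.sqrt a ≤ Nat.sqrt (a+1) := Nat.sqrt_le_sqrt (by omega)
  have hsimp : a + 1 - 1 = a := by omega
  rw [hsimp] at hL4
  rw [abs_le]
  omega
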